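/- Let $a > 1$ be an integer. Then $\int_1^{\infty} \left(a\left\{\frac{t+1}{a}\right\} - \{t\} - 1\right) \frac{dt}{t^2} = \frac{\Gamma'((a-1)/a)}{\Gamma((a-1)/a)} + \log a + \gamma$, where $\{x\}$ denotes the fractional part of $x$. -/

import Mathlib

open MeasureTheory Real Set Filter Topology Finset

local notation "γ" => Real.eulerMascheroniConstant
local notation "ψ" => deriv (Real.log ∘ Real.Gamma)

noncomputable def cc (a n : ℕ) : ℝ := (((n+1) % a : ℕ) : ℝ) - 1
noncomputable def dd (a n : ℕ) : ℝ := 1 - (a : ℝ) * (if a ∣ (n+1) then 1 else 0)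
noncomputable def FF (a : ℕ) (t : ℝ) : ℝ :=
  ((a : ℝ) * Int.fract ((t + 1) / a) - Int.fract t - 1) / t ^ 2

lemma hderlg {x : ℝ} (hx : 0 < x) : DifferentiableAt ℝ (Real.log ∘ Real.Gamma) x := by
  refine ((Real.differentiableAt_Gamma ?_).log (Real.Gamma_ne_zero ?_)) <;>
  exact fun m ↦ ne_of_gt (by linarith [Nat.cast_nonneg (α := ℝ) m])

lemma psi_eq {x : ℝ} (hx : 0 < x) :
    ψ x = deriv Real.Gamma x / Real.Gamma x := by
  rw [Function.comp_def, deriv.log (Real.differentiableAt_Gamma fun m ↦ ne_of_gt (by linarith [Nat.cast_nonneg (α := ℝ) m]))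
    (Real.Gamma_ne_zero fun m ↦ ne_of_gt (by linarith [Nat.cast_nonneg (α := ℝ) m]))]

lemma psi_rec {x : ℝ} (hx : 0 < x) : ψ (x + 1) = ψ x + 1 / x := by
  rw [← deriv_comp_add_const, one_div, ← Real.deriv_log,
    ← deriv_fun_add (hderlg hx) (Real.differentiableAt_log hx.ne')]
  apply Filter.EventuallyEq.deriv_eq
  filter_upwards [eventually_gt_nhds hx] with y hy
  simp only [Function.comp_apply, Real.Gamma_add_one hy.ne',
    Real.log_mul hy.ne' (Real.Gamma_pos_of_pos hy).ne', add_comm]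

lemma psi_rec_nat {x : ℝ} (hx : 0 < x) (M : ℕ) :
    ψ (x + M) = ψ x + ∑ k ∈ range M, 1 / (x + k) := by
  induction M with
  | zero => simp
  | succ n ih =>
    rw [Finset.sum_range_succ, ← add_assoc, ← ih, Nat.cast_succ,
      show x + ((n:ℝ) + 1) = (x + n) + 1 by ring, psi_rec (by positivity)]

lemma psi_nat (n : ℕ) : ψ ((n : ℝ) + 1) = -γ + harmonic n := by
  rw [psi_eq (by positivity), Real.deriv_Gamma_nat n, Real.Gamma_nat_eq_factorial]
  have h : ((Nat.factorial n) : ℝ) ≠ 0 := by positivity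
  field_simp

lemma psi_mono {x y : ℝ} (hx : 0 < x) (hxy : x ≤ y) : ψ x ≤ ψ y :=
  Real.convexOn_log_Gamma.monotoneOn_deriv (fun z hz => hderlg hz) hx (lt_of_lt_of_le hx hxy) hxy

lemma log_ratio (a : ℕ) (ha : 1 < a) :
    Tendsto (fun M : ℕ => Real.log ((a : ℝ) * M - 1) - Real.log M) atTop (𝓝 (Real.log a)) := by
  have ha0 : (0:ℝ) < a := by positivity
  have h1 : Tendsto (fun M : ℕ => (a : ℝ) - 1 / M) atTop (𝓝 (a : ℝ)) := by
    simpa using tendsto_const_nhds.sub (tendsto_one_div_atTop_nhds_zero_nat (𝕜 := ℝ))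
  have h2 := ((Real.continuousAt_log ha0.ne').tendsto.comp h1)
  apply h2.congr'
  filter_upwards [eventually_ge_atTop 1] with M hM
  have hM0 : (0:ℝ) < M := by exact_mod_cast hM
  have hnum : (0:ℝ) < (a:ℝ) * M - 1 := by
    have h2 : (2:ℝ) ≤ a := by exact_mod_cast ha
    have hM1 : (1:ℝ) ≤ M := by exact_mod_cast hM
    nlinarith
  have : (a:ℝ) - 1 / M = ((a:ℝ) * M - 1) / M := by field_simp
  simp only [Function.comp_apply, this, Real.log_div hnum.ne' hM0.ne']

lemma tendsto_D (a : ℕ) (ha : 1 < a) :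
    Tendsto (fun M : ℕ => Real.log ((a : ℝ) * M - 1) - ψ (((a:ℝ) - 1)/a + M)) atTop
      (𝓝 (Real.log a)) := by
  have ha0 : (0:ℝ) < a := by positivity
  have hx0 : 0 ≤ ((a:ℝ) - 1)/a := by
    have h1 : (1:ℝ) ≤ a := by exact_mod_cast ha.le
    apply div_nonneg <;> linarith
  have hx1 : ((a:ℝ) - 1)/a ≤ 1 := by
    rw [div_le_one ha0]; linarith
  have hE : Tendsto (fun M : ℕ => Real.log ((a : ℝ) * M - 1) + γ - harmonic M) atTop
      (𝓝 (Real.log a)) := by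
    have h3 := (log_ratio a ha).sub (Real.tendsto_harmonic_sub_log.sub_const γ)
    rw [show Real.log a - (γ - γ) = Real.log a by ring] at h3
    apply h3.congr
    intro M; ring
  have hE' : Tendsto (fun M : ℕ => Real.log ((a : ℝ) * M - 1) + γ - harmonic M + 1 / M) atTop
      (𝓝 (Real.log a)) := by
    simpa using hE.add tendsto_one_div_atTop_nhds_zero_nat
  refine tendsto_of_tendsto_of_tendsto_of_le_of_le' hE hE' ?_ ?_
  · filter_upwards [eventually_ge_atTop 1] with M hM
    have hle : ((a:ℝ) - 1)/a + M ≤ (M : ℝ) + 1 := by linarith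
    have hpos : (0:ℝ) < ((a:ℝ) - 1)/a + M := by
      have hM1 : (1:ℝ) ≤ M := by exact_mod_cast hM
      linarith
    have := psi_mono hpos hle
    rw [psi_nat M] at this
    linarith
  · filter_upwards [eventually_ge_atTop 1] with M hM
    have hM1 : (1:ℝ) ≤ M := by exact_mod_cast hM
    have hpos : (0:ℝ) < M := by linarith
    have hle : (M:ℝ) ≤ ((a:ℝ) - 1)/a + M := by linarith
    have h := psi_mono hpos hle
    obtain ⟨m, rfl⟩ : ∃ m, M = m + 1 := ⟨M - 1, by omega⟩
    have hpsiM : ψ ((m+1 : ℕ) : ℝ) = -γ + harmonic m := by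
      rw [show (((m+1:ℕ)):ℝ) = (m:ℝ) + 1 by push_cast; ring, psi_nat m]
    rw [hpsiM] at h
    have hharm : (harmonic (m+1) : ℝ) = harmonic m + 1/((m:ℝ)+1) := by
      rw [harmonic_succ]; push_cast; ring
    rw [hharm]
    push_cast at h ⊢
    linarith

lemma integral_const_div_sq {x y C : ℝ} (hx : 0 < x) (hxy : x ≤ y) :
    ∫ t in x..y, C / t ^ 2 = C * (1 / x - 1 / y) := by
  have hy : 0 < y := lt_of_lt_of_le hx hxy
  have h0 : (0:ℝ) ∉ Set.uIcc x y := by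
    rw [Set.uIcc_of_le hxy]
    intro h
    exact absurd h.1 (not_le.mpr hx)
  rw [intervalIntegral.integral_congr (g := fun t => C * t ^ (-2 : ℤ))]
  · rw [intervalIntegral.integral_const_mul, integral_zpow (Or.inr ⟨by norm_num, h0⟩)]
    have hz : ∀ z : ℝ, 0 < z → z ^ ((-2 : ℤ) + 1) = 1 / z := by
      intro z hz; norm_num
    rw [hz x hx, hz y hy]
    push_cast
    ring
  · intro t ht
    rw [Set.uIcc_of_le hxy] at ht
    have ht0 : (0:ℝ) < t := lt_of_lt_of_le hx ht.1
    have : t ^ (-2 : ℤ) = (t ^ 2)⁻¹ := by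
      rw [zpow_neg, zpow_two]; ring_nf
    simp [this, div_eq_mul_inv]

lemma FF_eq_on (a : ℕ) (ha : 1 < a) (n : ℕ) (hn : 1 ≤ n) {t : ℝ}
    (ht : t ∈ Set.Ioo (n : ℝ) ((n : ℝ) + 1)) : FF a t = cc a n / t ^ 2 := by
  obtain ⟨ht1, ht2⟩ := ht
  have ha0 : (0:ℝ) < a := by positivity
  have hfr1 : Int.fract t = t - n := by
    rw [Int.fract, Int.floor_eq_iff.mpr ⟨le_of_lt (by exact_mod_cast ht1), by exact_mod_cast ht2⟩]
    push_cast; ring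
  set q : ℕ := (n+1) / a with hq
  have hdiv : a * q ≤ n + 1 := Nat.mul_div_le (n+1) a
  have hdiv2 : n + 1 < a * (q + 1) := Nat.lt_mul_div_succ (n+1) (by omega)
  have hfl : ⌊(t + 1) / a⌋ = (q : ℤ) := by
    rw [Int.floor_eq_iff]
    constructor
    · rw [le_div_iff₀ ha0]
      have h5 : ((a * q : ℕ) : ℝ) ≤ ((n + 1 : ℕ) : ℝ) := by exact_mod_cast hdiv
      push_cast at h5 ⊢
      linarith
    · rw [div_lt_iff₀ ha0]
      have hdiv2' : n + 2 ≤ a * (q + 1) := hdiv2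
      have h6 : ((n + 2 : ℕ) : ℝ) ≤ ((a * (q+1) : ℕ) : ℝ) := by exact_mod_cast hdiv2'
      push_cast at h6 ⊢
      linarith
  have hfr2 : Int.fract ((t + 1) / a) = (t + 1) / a - q := by
    rw [Int.fract, hfl]; push_cast; ring
  have hmod : ((n+1) % a : ℕ) = (n + 1) - a * q := by
    rw [hq]
    have := Nat.mod_add_div (n+1) a
    omega
  simp only [FF, cc, hfr1, hfr2]
  have h7 : (a:ℝ) * ((t + 1) / a - q) = t + 1 - a * q := by
    field_simp
  rw [h7]
  have hcast : ((((n+1) % a : ℕ)) : ℝ) = ((n:ℝ) + 1) - (a:ℝ) * q := by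
    rw [hmod]
    push_cast [Nat.cast_sub hdiv]
    ring
  rw [hcast]
  ring_nf

lemma integral_block (a : ℕ) (ha : 1 < a) (n : ℕ) (hn : 1 ≤ n) :
    ∫ t in (n : ℝ)..((n : ℝ) + 1), FF a t = cc a n * (1 / n - 1 / ((n:ℝ) + 1)) := by
  have hn0 : (0:ℝ) < n := by exact_mod_cast hn
  have hle : (n:ℝ) ≤ (n:ℝ) + 1 := by linarith
  rw [← integral_const_div_sq (C := cc a n) hn0 hle]
  rw [intervalIntegral.integral_of_le hle, intervalIntegral.integral_of_le hle]
  apply MeasureTheory.setIntegral_congr_ae measurableSet_Ioc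
  have hae : ∀ᵐ t : ℝ, t ≠ (n:ℝ) + 1 := by
    rw [ae_iff]
    simp only [ne_eq, not_not, Set.setOf_eq_eq_singleton]
    exact measure_singleton _
  filter_upwards [hae] with t ht htmem
  exact FF_eq_on a ha n hn ⟨htmem.1, lt_of_le_of_ne htmem.2 ht⟩

lemma FF_integrable (a : ℕ) (ha : 1 < a) : IntegrableOn (FF a) (Set.Ioi (1:ℝ)) := by
  have hmeas : Measurable (FF a) := by
    apply Measurable.div
    · exact (((measurable_fract.comp ((measurable_id.add_const 1).div_const _)).const_mul
        _).sub (measurable_fract.comp measurable_id)).sub measurable_const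
    · exact (measurable_id.pow_const 2)
  have hbound : IntegrableOn (fun t : ℝ => ((a:ℝ) + 2) * t ^ (-2 : ℝ)) (Set.Ioi (1:ℝ)) :=
    (integrableOn_Ioi_rpow_of_lt (by norm_num) one_pos).const_mul _
  apply Integrable.mono' hbound (hmeas.aestronglyMeasurable.restrict)
  rw [ae_restrict_iff' measurableSet_Ioi]
  apply Filter.Eventually.of_forall
  intro t ht
  have ht1 : (1:ℝ) < t := ht
  have ht0 : (0:ℝ) < t := by linarith
  have hrpow : t ^ (-2 : ℝ) = (t^2)⁻¹ := by
    rw [Real.rpow_neg ht0.le, show ((2:ℝ)) = ((2:ℕ):ℝ) by norm_num, Real.rpow_natCast]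
  rw [FF, hrpow, norm_div, div_eq_mul_inv]
  have h2 : ‖t^2‖ = t^2 := by
    rw [Real.norm_eq_abs, abs_of_pos (by positivity)]
  gcongr
  · rw [Real.norm_eq_abs]
    have hf1 := Int.fract_nonneg ((t+1)/a)
    have hf2 := Int.fract_lt_one ((t+1)/a)
    have hf3 := Int.fract_nonneg t
    have hf4 := Int.fract_lt_one t
    have ha1 : (1:ℝ) ≤ a := by exact_mod_cast ha.le
    rw [abs_le]
    constructor <;> nlinarith
  · rw [h2]

lemma FF_intervalIntegrable (a : ℕ) (ha : 1 < a) {x y : ℝ} (hx : 1 ≤ x) (hxy : x ≤ y) :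
    IntervalIntegrable (FF a) volume x y := by
  rw [intervalIntegrable_iff_integrableOn_Ioc_of_le hxy]
  exact (FF_integrable a ha).mono_set (fun t ht => lt_of_le_of_lt hx ht.1)

lemma key_mod (a n : ℕ) (ha : 1 < a) : cc a (n+1) = dd a (n+1) + cc a n := by
  have ha0 : 0 < a := by omega
  have hr : (n+1) % a < a := Nat.mod_lt _ ha0
  have heq : (n+2) % a = ((n+1) % a + 1) % a := by
    conv_lhs => rw [show n+2 = (n+1)+1 from rfl, Nat.add_mod, Nat.mod_eq_of_lt ha]
  by_cases h : a ∣ (n+2)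
  · have h0 : (n+2) % a = 0 := (Nat.dvd_iff_mod_eq_zero).mp h
    have hra : (n+1) % a = a - 1 := by
      rcases Nat.lt_or_ge ((n+1) % a + 1) a with h1 | h1
      · rw [heq, Nat.mod_eq_of_lt h1] at h0; omega
      · omega
    simp only [cc, dd, show n+1+1 = n+2 from rfl, if_pos h, h0, hra]
    rw [Nat.cast_sub (by omega)]
    push_cast
    ring
  · have h0 : (n+2) % a ≠ 0 := fun hc => h ((Nat.dvd_iff_mod_eq_zero).mpr hc)
    have hlt : (n+1) % a + 1 < a := by
      rcases Nat.lt_or_ge ((n+1) % a + 1) a with h1 | h1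
      · exact h1
      · exfalso
        have : (n+1) % a + 1 = a := by omega
        rw [heq, this, Nat.mod_self] at h0
        exact h0 rfl
    have h2 : (n+2) % a = (n+1) % a + 1 := by rw [heq, Nat.mod_eq_of_lt hlt]
    simp only [cc, dd, show n+1+1 = n+2 from rfl, if_neg h, h2]
    push_cast
    ring

lemma cc_zero (a : ℕ) (ha : 1 < a) : cc a 0 = 0 := by
  simp [cc, Nat.mod_eq_of_lt ha]

lemma sum_id (a : ℕ) (ha : 1 < a) (N : ℕ) :
    ∑ i ∈ range N, cc a (i+1) * (1/((i:ℝ)+1) - 1/((i:ℝ)+2))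
      = (∑ i ∈ range N, dd a (i+1) / ((i:ℝ)+1)) - cc a N / ((N:ℝ)+1) := by
  induction N with
  | zero => simp [cc_zero a ha]
  | succ n ih =>
    rw [Finset.sum_range_succ, Finset.sum_range_succ, ih, key_mod a n ha]
    have h1 : ((n:ℝ)+1) ≠ 0 := by positivity
    have h2 : ((n:ℝ)+2) ≠ 0 := by positivity
    have h3 : (((n+1:ℕ)):ℝ) + 1 = (n:ℝ) + 2 := by push_cast; ring
    rw [h3]
    field_simp
    ring

lemma dd_sum (a M : ℕ) (ha : 1 < a) :
    ∑ n ∈ range (a*M - 1), dd a (n+1) / ((n:ℝ)+1)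
      = (harmonic (a*M - 1) : ℝ) - (a:ℝ) * ∑ k ∈ range M, 1 / ((a:ℝ) * (k+1) - 1) := by
  have hsplit : ∀ n : ℕ, dd a (n+1) / ((n:ℝ)+1)
      = 1/((n:ℝ)+1) - (a:ℝ) * (if a ∣ (n+2) then 1/((n:ℝ)+1) else 0) := by
    intro n
    simp only [dd, show n+1+1 = n+2 from rfl]
    by_cases h : a ∣ n+2 <;> simp [h] <;> ring
  simp only [hsplit]
  rw [Finset.sum_sub_distrib, ← Finset.mul_sum]
  congr 1
  · rw [show ((harmonic (a*M-1) : ℚ) : ℝ) = ∑ i ∈ range (a*M-1), 1/((i:ℝ)+1) by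
      simp [harmonic]]
  · congr 1
    rw [Finset.sum_ite, Finset.sum_const_zero, add_zero]
    symm
    apply Finset.sum_nbij' (fun k => a*(k+1) - 2) (fun n => (n+2)/a - 1)
    · intro k hk
      simp only [Finset.mem_range] at hk
      simp only [Finset.mem_filter, Finset.mem_range]
      have h2a : a ≤ a*(k+1) := Nat.le_mul_of_pos_right _ (by omega)
      have hmul : a*(k+1) ≤ a*M := Nat.mul_le_mul_left a (by omega)
      constructor
      · omega
      · have h3 : a*(k+1) - 2 + 2 = a*(k+1) := by omega
        rw [h3]
        exact Dvd.intro _ rfl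
    · intro n hn
      simp only [Finset.mem_filter, Finset.mem_range] at hn
      simp only [Finset.mem_range]
      obtain ⟨hn1, ⟨c, hc⟩⟩ := hn
      have hc1 : 1 ≤ c := by
        rcases Nat.eq_zero_or_pos c with rfl | h
        · simp [Nat.mul_zero] at hc
        · exact h
      have hcM : c ≤ M := by
        refine Nat.le_of_mul_le_mul_left ?_ (show 0 < a by omega)
        omega
      rw [hc, Nat.mul_div_cancel_left _ (by omega)]
      omega
    · intro k hk
      simp only [Finset.mem_range] at hk
      have h2a : a ≤ a*(k+1) := Nat.le_mul_of_pos_right _ (by omega)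
      have h3 : a*(k+1) - 2 + 2 = a*(k+1) := by omega
      rw [h3, Nat.mul_div_cancel_left _ (by omega)]
      omega
    · intro n hn
      simp only [Finset.mem_filter, Finset.mem_range] at hn
      obtain ⟨hn1, ⟨c, hc⟩⟩ := hn
      have hc1 : 1 ≤ c := by
        rcases Nat.eq_zero_or_pos c with rfl | h
        · simp [Nat.mul_zero] at hc
        · exact h
      rw [hc, Nat.mul_div_cancel_left _ (by omega)]
      have : c - 1 + 1 = c := by omega
      rw [this]
      omega
    · intro k hk
      simp only [Finset.mem_range] at hk
      have h2a : a ≤ a*(k+1) := Nat.le_mul_of_pos_right _ (by omega)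
      have hcast : (((a*(k+1) - 2 : ℕ)) : ℝ) + 1 = (a:ℝ) * ((k:ℝ)+1) - 1 := by
        rw [Nat.cast_sub (by omega)]
        push_cast
        ring
      rw [hcast]

lemma integral_to_sum (a : ℕ) (ha : 1 < a) (N : ℕ) :
    ∫ t in (1:ℝ)..(1 + (N:ℝ)), FF a t
      = ∑ i ∈ range N, cc a (i+1) * (1/((i:ℝ)+1) - 1/((i:ℝ)+2)) := by
  have hsum := intervalIntegral.sum_integral_adjacent_intervals (μ := volume)
    (a := fun i : ℕ => (1 + (i:ℝ))) (n := N)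
    (fun k hk => FF_intervalIntegrable a ha (by push_cast; linarith [Nat.cast_nonneg (α := ℝ) k])
      (by push_cast; linarith))
  simp only [Nat.cast_zero, add_zero] at hsum
  rw [← hsum]
  apply Finset.sum_congr rfl
  intro i _
  have hb := integral_block a ha (i+1) (by omega)
  rw [show (1:ℝ) + ((i:ℕ):ℝ) = ((i+1:ℕ):ℝ) by push_cast; ring,
    show (1:ℝ) + ((i+1:ℕ):ℝ) = ((i+1:ℕ):ℝ) + 1 by push_cast; ring, hb]
  push_cast
  ring_nf

theorem integral_fract_eq_digamma_add (a : ℕ) (ha : 1 < a) :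
    ∫ t in Set.Ioi (1 : ℝ),
        ((a : ℝ) * Int.fract ((t + 1) / a) - Int.fract t - 1) / t ^ 2
      = deriv Real.Gamma (((a : ℝ) - 1) / a) / Real.Gamma (((a : ℝ) - 1) / a)
        + Real.log a + Real.eulerMascheroniConstant := by
  have ha0 : (0:ℝ) < a := by positivity
  have ha1 : (1:ℝ) ≤ a := by exact_mod_cast ha.le
  set x₀ : ℝ := ((a:ℝ) - 1) / a with hx₀
  have hx0 : 0 ≤ x₀ := by apply div_nonneg <;> linarith
  have hx0' : 0 < x₀ := by
    apply div_pos ?_ ha0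
    have : (2:ℝ) ≤ a := by exact_mod_cast ha
    linarith
  -- limit of interval integrals
  have hb : Tendsto (fun M : ℕ => (a:ℝ) * M) atTop atTop := by
    apply Filter.Tendsto.const_mul_atTop ha0 tendsto_natCast_atTop_atTop
  have hI := MeasureTheory.intervalIntegral_tendsto_integral_Ioi 1 (FF_integrable a ha) hb
  -- limit of the explicit sequence
  have hharm : Tendsto (fun M : ℕ => (harmonic (a*M-1) : ℝ) - Real.log ((a:ℝ)*M - 1)) atTop
      (𝓝 γ) := by
    have hcomp : Tendsto (fun M : ℕ => a*M - 1) atTop atTop := by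
      apply Filter.tendsto_atTop_atTop.mpr
      intro b
      refine ⟨b+1, fun M hM => ?_⟩
      have : 2*M ≤ a*M := Nat.mul_le_mul_right M (by omega)
      omega
    have := Real.tendsto_harmonic_sub_log.comp hcomp
    apply this.congr'
    filter_upwards [eventually_ge_atTop 1] with M hM
    have h2M : 2*M ≤ a*M := Nat.mul_le_mul_right M (by omega)
    have hcast : ((a*M-1 : ℕ) : ℝ) = (a:ℝ)*M - 1 := by
      push_cast [Nat.cast_sub (show 1 ≤ a*M by omega)]
      ring
    simp only [Function.comp_apply, hcast]
  have hinv : Tendsto (fun M : ℕ => 1/((a:ℝ)*M)) atTop (𝓝 0) := by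
    have := tendsto_one_div_atTop_nhds_zero_nat.const_mul (1/(a:ℝ))
    rw [mul_zero] at this
    apply this.congr
    intro M
    rw [one_div, one_div, one_div, mul_inv]
  have hT : Tendsto (fun M : ℕ =>
      ψ x₀ + ((harmonic (a*M-1) : ℝ) - Real.log ((a:ℝ)*M - 1))
        + (Real.log ((a:ℝ)*M - 1) - ψ (x₀ + M)) + 1/((a:ℝ)*M)) atTop
      (𝓝 (ψ x₀ + γ + Real.log a + 0)) :=
    ((tendsto_const_nhds.add hharm).add (tendsto_D a ha)).add hinv
  -- identify sequences eventually
  have hEq : ∀ᶠ M : ℕ in atTop, (∫ t in (1:ℝ)..((a:ℝ)*M), FF a t)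
      = ψ x₀ + ((harmonic (a*M-1) : ℝ) - Real.log ((a:ℝ)*M - 1))
        + (Real.log ((a:ℝ)*M - 1) - ψ (x₀ + M)) + 1/((a:ℝ)*M) := by
    filter_upwards [eventually_ge_atTop 1] with M hM
    have h2M : 2*M ≤ a*M := Nat.mul_le_mul_right M (by omega)
    have haM : 1 ≤ a*M := by omega
    have hcast : ((a*M-1 : ℕ) : ℝ) = (a:ℝ)*M - 1 := by
      push_cast [Nat.cast_sub haM]; ring
    have hstep1 : (∫ t in (1:ℝ)..((a:ℝ)*M), FF a t)
        = ∫ t in (1:ℝ)..(1 + ((a*M-1 : ℕ):ℝ)), FF a t := by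
      rw [hcast]; ring_nf
    rw [hstep1, integral_to_sum a ha (a*M-1), sum_id a ha (a*M-1), dd_sum a M ha]
    -- cc a (a*M-1) = -1
    have hccval : cc a (a*M-1) = -1 := by
      have h1 : (a*M-1)+1 = a*M := by omega
      have h2 : (a*M) % a = 0 := Nat.mul_mod_right a M
      simp [cc, h1, h2]
    -- ψ recurrence
    have hterm : ∀ k : ℕ, 1/(x₀ + k) = (a:ℝ) * (1/((a:ℝ)*((k:ℝ)+1) - 1)) := by
      intro k
      have hden : (0:ℝ) < (a:ℝ)*((k:ℝ)+1) - 1 := by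
        have hk0 : (0:ℝ) ≤ (k:ℝ) := Nat.cast_nonneg k
        have h2a : (2:ℝ) ≤ a := by exact_mod_cast ha
        nlinarith [mul_nonneg (by linarith : (0:ℝ) ≤ (a:ℝ)-2) (by linarith : (0:ℝ) ≤ (k:ℝ)+1)]
      rw [show x₀ + (k:ℝ) = ((a:ℝ)*((k:ℝ)+1) - 1)/(a:ℝ) by rw [hx₀]; field_simp; ring,
        one_div_div, mul_one_div]
    have hrec := psi_rec_nat hx0' M
    rw [Finset.sum_congr rfl (fun k _ => hterm k), ← Finset.mul_sum] at hrec
    have hsum_eq : (a:ℝ) * ∑ k ∈ range M, 1 / ((a:ℝ) * ((k:ℝ)+1) - 1) = ψ (x₀ + M) - ψ x₀ := by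
      rw [hrec]; ring
    rw [hccval, hcast, hsum_eq]
    ring
  have hlim2 := hT.congr' (hEq.mono fun _ h => h.symm)
  have := tendsto_nhds_unique hI hlim2
  rw [show (∫ t in Set.Ioi (1:ℝ), ((a : ℝ) * Int.fract ((t + 1) / a) - Int.fract t - 1) / t ^ 2)
      = ∫ t in Set.Ioi (1:ℝ), FF a t from rfl, this, psi_eq hx0']
  ring
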